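/- Let A = [a_{ij}] and B = [b_{ij}] be n × n positive definite complex matrices, and let 2 ≤ p ≤ n. Then the following two chains of real inequalities hold: det(A_p ∘ B_p)/det(A_{p−1} ∘ B_{p−1}) ≥ a_{pp} · det B_p / det B_{p−1} ≥ det(A_p B_p)/det(A_{p−1} B_{p−1}), and det(A_p ∘ B_p)/det(A_{p−1} ∘ B_{p−1}) ≥ b_{pp} · det A_p / det A_{p−1} ≥ det(A_p B_p)/det(A_{p−1} B_{p−1}), where A_p and B_p are the p × p leading principal submatrices. -/

import Mathlib

open Matrix ComplexOrder

/-- The `p × p` leading principal submatrix `A_p` (for `p ≤ n`) of an `n × n` matrix. -/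
def leadSub {n : ℕ} (A : Matrix (Fin n) (Fin n) ℂ) (p : ℕ) (h : p ≤ n) :
    Matrix (Fin p) (Fin p) ℂ :=
  A.submatrix (Fin.castLE h) (Fin.castLE h)

section Aux

set_option linter.unusedSectionVars false

theorem aux_psd_det_nonneg {n : Type*} [Fintype n] [DecidableEq n] {M : Matrix n n ℂ}
    (h : M.PosSemidef) : 0 ≤ M.det := by
  exact h.det_nonneg

theorem aux_psd_diag_nonneg {n : Type*} [Fintype n] [DecidableEq n] {M : Matrix n n ℂ}
    (h : M.PosSemidef) (j : n) : 0 ≤ M j j := by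
  exact h.diag_nonneg

theorem aux_pd_diag_pos {n : Type*} [Fintype n] [DecidableEq n] {M : Matrix n n ℂ}
    (h : M.PosDef) (j : n) : 0 < M j j := by
  exact h.diag_pos

theorem aux_creal {z : ℂ} (h : 0 < z) : z = (z.re : ℂ) := by
  have h2 := (Complex.lt_def.mp h).2
  exact Complex.ext (by simp) (by simp [← h2])

theorem aux_cre_pos {z : ℂ} (h : 0 < z) : 0 < z.re := (Complex.lt_def.mp h).1

theorem aux_cdiv_pos {a b : ℂ} (ha : 0 < a) (hb : 0 < b) : 0 < a / b := by
  rw [aux_creal ha, aux_creal hb, ← Complex.ofReal_div, Complex.zero_lt_real]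
  exact div_pos (aux_cre_pos ha) (aux_cre_pos hb)

theorem posDef_submatrix {l n : Type*} [Fintype l] [Fintype n] [DecidableEq l] [DecidableEq n]
    {M : Matrix n n ℂ} (hM : M.PosDef) {f : l → n}
    (hf : Function.Injective f) : (M.submatrix f f).PosDef := by
  refine Matrix.posDef_iff_dotProduct_mulVec.mpr ⟨hM.1.submatrix f, fun x hx => ?_⟩
  have hsum : ∀ (u : l → ℂ) (w : n → ℂ),
      ∑ j, Function.extend f u 0 j * w j = ∑ i, u i * w (f i) := by
    intro u w
    rw [show (∑ i, u i * w (f i)) = ∑ i, Function.extend f u 0 (f i) * w (f i) from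
      Finset.sum_congr rfl fun i _ => by rw [hf.extend_apply]]
    rw [← Finset.sum_image (g := f) (f := fun j => Function.extend f u 0 j * w j)
      (fun a _ b _ hab => hf hab)]
    refine (Finset.sum_subset (Finset.subset_univ _) fun j _ hj => ?_).symm
    rw [Function.extend_apply', Pi.zero_apply, zero_mul]
    rintro ⟨i, rfl⟩; exact hj (Finset.mem_image_of_mem f (Finset.mem_univ i))
  set y : n → ℂ := Function.extend f x 0 with hy
  have hyf : ∀ i, y (f i) = x i := fun i => hf.extend_apply x 0 i
  have hy0 : y ≠ 0 := fun h => hx (funext fun i => by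
    simpa [hyf i] using congrFun h (f i))
  have hstar : ∀ j, star (y j) = Function.extend f (star x) 0 j := by
    intro j
    by_cases h : ∃ i, f i = j
    · obtain ⟨i, rfl⟩ := h
      rw [hyf, hf.extend_apply]; rfl
    · rw [hy, Function.extend_apply' _ _ _ h, Function.extend_apply' _ _ _ h]
      simp
  have key : star x ⬝ᵥ (M.submatrix f f) *ᵥ x = star y ⬝ᵥ M *ᵥ y := by
    simp only [dotProduct, Matrix.mulVec, Pi.star_apply, Matrix.submatrix_apply]
    calc ∑ i, star (x i) * ∑ i', M (f i) (f i') * x i'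
        = ∑ i, star x i * ∑ j, y j * M (f i) j := by
          refine Finset.sum_congr rfl fun i _ => ?_
          rw [hy, hsum x (fun j => M (f i) j)]
          congr 1
          exact Finset.sum_congr rfl fun i' _ => mul_comm _ _
      _ = ∑ j, Function.extend f (star x) 0 j * ∑ j', M j j' * y j' := by
          rw [hsum (star x) (fun j => ∑ j', M j j' * y j')]
          refine Finset.sum_congr rfl fun i _ => ?_
          congr 1
          exact Finset.sum_congr rfl fun j _ => mul_comm _ _
      _ = ∑ j, star (y j) * ∑ j', M j j' * y j' := by
          exact Finset.sum_congr rfl fun j _ => by rw [hstar]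
  rw [key]; exact hM.dotProduct_mulVec_pos hy0

theorem hadamard_posSemidef {n : Type*} [Fintype n] [DecidableEq n] {M N : Matrix n n ℂ}
    (hM : M.PosSemidef) (hN : N.PosSemidef) : (Matrix.hadamard M N).PosSemidef := by
  exact hM.hadamard hN

theorem det_add_single {m : ℕ} (Z : Matrix (Fin (m+1)) (Fin (m+1)) ℂ) (t : ℂ) :
    (Z + t • Matrix.single (Fin.last m) (Fin.last m) 1).det
      = Z.det + t * (Z.submatrix (Fin.castLE m.le_succ) (Fin.castLE m.le_succ)).det := by
  have h1 : Z + t • Matrix.single (Fin.last m) (Fin.last m) 1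
      = Z.updateCol (Fin.last m)
          ((fun i => Z i (Fin.last m)) + t • (Pi.single (Fin.last m) 1 : Fin (m+1) → ℂ)) := by
    ext i j
    by_cases hj : j = Fin.last m
    · subst hj
      by_cases hi : i = Fin.last m <;>
        simp [Matrix.updateCol_apply, hi, Matrix.single, Pi.single_apply,
          eq_comm (a := Fin.last m)]
    · simp only [Matrix.add_apply, Matrix.smul_apply, Matrix.single, Matrix.of_apply,
        Matrix.updateCol_apply, if_neg hj, smul_eq_mul]
      rw [if_neg (fun h => hj h.2.symm), mul_zero, add_zero]
  rw [h1, Matrix.det_updateCol_add, Matrix.updateCol_eq_self, Matrix.det_updateCol_smul]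
  congr 1
  rw [Matrix.det_succ_column _ (Fin.last m), Finset.sum_eq_single (Fin.last m)]
  · rw [Matrix.updateCol_self]
    simp only [Pi.single_eq_same]
    have hpow : (-1 : ℂ) ^ ((Fin.last m : ℕ) + (Fin.last m : ℕ)) = 1 :=
      Even.neg_one_pow ⟨m, rfl⟩
    rw [hpow, one_mul, one_mul]
    have h2 :  (Z.updateCol (Fin.last m) (Pi.single (Fin.last m) 1)).submatrix
        (Fin.last m).succAbove (Fin.last m).succAbove
        = Z.submatrix (Fin.castLE m.le_succ) (Fin.castLE m.le_succ) := by
      ext i j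
      have hsa : (Fin.last m).succAbove = Fin.castSucc := Fin.succAbove_last
      rw [hsa]
      rw [Matrix.submatrix_apply, Matrix.submatrix_apply, Matrix.updateCol_apply,
        if_neg (Fin.castSucc_lt_last j).ne]
      rfl
    rw [h2]
  · intro b _ hb
    rw [Matrix.updateCol_self, Pi.single_eq_of_ne hb, mul_zero, zero_mul]
  · simp

theorem decomp {m : ℕ} {C : Matrix (Fin (m+1)) (Fin (m+1)) ℂ} (hC : C.PosDef) :
    ∃ (N : Matrix (Fin (m+1)) (Fin (m+1)) ℂ) (s : ℂ),
      N.PosSemidef ∧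
      C = N + s • Matrix.single (Fin.last m) (Fin.last m) 1 ∧
      C.det = (C.submatrix (Fin.castLE m.le_succ) (Fin.castLE m.le_succ)).det * s ∧
      s ≤ C (Fin.last m) (Fin.last m) := by
  set e : Fin m ⊕ Fin 1 ≃ Fin (m+1) := finSumFinEquiv with he
  have hleft : ∀ i : Fin m, e (Sum.inl i) = Fin.castLE m.le_succ i := by
    intro i; rw [he, finSumFinEquiv_apply_left]; exact Fin.ext rfl
  have hlne : ∀ i : Fin m, e (Sum.inl i) ≠ Fin.last m := by
    intro i h
    have := congrArg Fin.val ((hleft i).symm.trans h)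
    simp [Fin.last] at this
    omega
  have hlast : e (Sum.inr 0) = Fin.last m := by
    rw [he, finSumFinEquiv_apply_right]
    exact Fin.ext (by simp [Fin.last])
  set Ch := C.submatrix e e with hCh
  have hChpd : Ch.PosDef := posDef_submatrix hC e.injective
  set C11 := Ch.toBlocks₁₁ with hC11
  set C12 := Ch.toBlocks₁₂ with hC12
  have hC11pd : C11.PosDef := posDef_submatrix hChpd Sum.inl_injective
  haveI : Invertible C11 := hC11pd.isUnit.invertible
  have hherm : Ch.toBlocks₂₁ = C12ᴴ := by
    ext i j
    simp only [Matrix.toBlocks₂₁, Matrix.conjTranspose_apply, hC12, Matrix.toBlocks₁₂,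
      Matrix.of_apply]
    exact (hChpd.1.apply (Sum.inr i) (Sum.inl j)).symm
  set S : Matrix (Fin 1) (Fin 1) ℂ := Ch.toBlocks₂₂ - C12ᴴ * C11⁻¹ * C12 with hS
  set s : ℂ := S 0 0 with hs
  set Nb : Matrix (Fin m ⊕ Fin 1) (Fin m ⊕ Fin 1) ℂ :=
    Matrix.fromBlocks C11 C12 C12ᴴ (C12ᴴ * C11⁻¹ * C12) with hNb
  have hNbpsd : Nb.PosSemidef := by
    rw [hNb, Matrix.PosDef.fromBlocks₁₁ _ _ hC11pd, sub_self]
    exact Matrix.PosSemidef.zero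
  have hChEq : Ch = Nb + Matrix.fromBlocks 0 0 0 S := by
    calc Ch = Matrix.fromBlocks C11 C12 Ch.toBlocks₂₁ Ch.toBlocks₂₂ :=
          (Matrix.fromBlocks_toBlocks Ch).symm
      _ = Matrix.fromBlocks C11 C12 C12ᴴ ((C12ᴴ * C11⁻¹ * C12) + S) := by
          rw [hherm, hS, add_sub_cancel]
      _ = Nb + Matrix.fromBlocks 0 0 0 S := by
          rw [hNb, Matrix.fromBlocks_add]
          simp
  have hCeq : C = Ch.submatrix e.symm e.symm := by ext i j; simp [hCh]
  have hE : (Matrix.fromBlocks (0 : Matrix (Fin m) (Fin m) ℂ) 0 0 S).submatrix e.symm e.symm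
      = s • Matrix.single (Fin.last m) (Fin.last m) 1 := by
    have h2 : Matrix.fromBlocks (0 : Matrix (Fin m) (Fin m) ℂ) 0 0 S
        = (s • Matrix.single (Fin.last m) (Fin.last m) (1:ℂ)).submatrix e e := by
      ext i j
      rcases i with i | i <;> rcases j with j | j <;>
        simp only [Matrix.fromBlocks_apply₁₁, Matrix.fromBlocks_apply₁₂,
          Matrix.fromBlocks_apply₂₁, Matrix.fromBlocks_apply₂₂, Matrix.submatrix_apply,
          Matrix.smul_apply, Matrix.single, Matrix.of_apply, smul_eq_mul,
          Matrix.zero_apply]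
      · rw [if_neg (fun h => hlne i h.1.symm), mul_zero]
      · rw [if_neg (fun h => hlne i h.1.symm), mul_zero]
      · rw [if_neg (fun h => hlne j h.2.symm), mul_zero]
      · have hi : i = 0 := Subsingleton.elim _ _
        have hj : j = 0 := Subsingleton.elim _ _
        subst hi; subst hj
        rw [if_pos ⟨hlast.symm, hlast.symm⟩, mul_one, hs]
    rw [h2]
    ext i j
    simp [Matrix.single, Matrix.of_apply, mul_ite, mul_one, mul_zero]
  refine ⟨Nb.submatrix e.symm e.symm, s, hNbpsd.submatrix _, ?_, ?_, ?_⟩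
  · have hadd : (Nb + Matrix.fromBlocks 0 0 0 S).submatrix e.symm e.symm
        = Nb.submatrix e.symm e.symm
          + (Matrix.fromBlocks (0 : Matrix (Fin m) (Fin m) ℂ) 0 0 S).submatrix e.symm e.symm := by
      ext i j; simp
    rw [hCeq, hChEq, hadd, hE]
  · have hdet1 : C.det = Ch.det := (Matrix.det_submatrix_equiv_self e C).symm
    have hdet2 : Ch.det = C11.det * S.det := by
      nth_rewrite 1 [← Matrix.fromBlocks_toBlocks Ch, hherm]
      rw [Matrix.det_fromBlocks₁₁]
      congr 2
      rw [hS, invOf_eq_nonsing_inv]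
    have hC11lead : C11 = C.submatrix (Fin.castLE m.le_succ) (Fin.castLE m.le_succ) := by
      ext i j
      simp only [hC11, Matrix.toBlocks₁₁, Matrix.of_apply, hCh, Matrix.submatrix_apply]
      rw [hleft, hleft]
    rw [hdet1, hdet2, hC11lead, Matrix.det_fin_one, hs]
  · have hr : 0 ≤ (C12ᴴ * C11⁻¹ * C12) 0 0 :=
      aux_psd_diag_nonneg ((hC11pd.inv.posSemidef).conjTranspose_mul_mul_same C12) 0
    have hcll : Ch.toBlocks₂₂ 0 0 = C (Fin.last m) (Fin.last m) := by
      simp only [Matrix.toBlocks₂₂, Matrix.of_apply, hCh, Matrix.submatrix_apply, hlast]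
    have heq : s = C (Fin.last m) (Fin.last m) - (C12ᴴ * C11⁻¹ * C12) 0 0 := by
      rw [hs, hS, Matrix.sub_apply, hcll]
    rw [heq]
    exact sub_le_self _ hr

theorem fischer {m : ℕ} {C : Matrix (Fin (m+1)) (Fin (m+1)) ℂ} (hC : C.PosDef) :
    C.det ≤ C (Fin.last m) (Fin.last m)
      * (C.submatrix (Fin.castLE m.le_succ) (Fin.castLE m.le_succ)).det := by
  obtain ⟨N, s, _, _, hdet, hsle⟩ := decomp hC
  have h0 : 0 ≤ (C.submatrix (Fin.castLE m.le_succ) (Fin.castLE m.le_succ)).det :=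
    (posDef_submatrix hC (Fin.castLE_injective m.le_succ)).det_pos.le
  rw [hdet, mul_comm]
  exact mul_le_mul_of_nonneg_right hsle h0

theorem step {m : ℕ} {C D : Matrix (Fin (m+1)) (Fin (m+1)) ℂ} (hC : C.PosDef) (hD : D.PosDef) :
    C.det / (C.submatrix (Fin.castLE m.le_succ) (Fin.castLE m.le_succ)).det
        * D (Fin.last m) (Fin.last m)
        * (Matrix.hadamard (C.submatrix (Fin.castLE m.le_succ) (Fin.castLE m.le_succ))
            (D.submatrix (Fin.castLE m.le_succ) (Fin.castLE m.le_succ))).det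
      ≤ (Matrix.hadamard C D).det := by
  obtain ⟨N, s, hN, hCeq, hdet, _⟩ := decomp hC
  have hleadpd : (C.submatrix (Fin.castLE m.le_succ) (Fin.castLE m.le_succ)).PosDef :=
    posDef_submatrix hC (Fin.castLE_injective m.le_succ)
  have hld0 : (C.submatrix (Fin.castLE m.le_succ) (Fin.castLE m.le_succ)).det ≠ 0 :=
    hleadpd.det_pos.ne'
  have hs : s = C.det / (C.submatrix (Fin.castLE m.le_succ) (Fin.castLE m.le_succ)).det :=
    (eq_div_iff hld0).mpr (by rw [hdet, mul_comm])
  have hhad : Matrix.hadamard C D = Matrix.hadamard N D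
      + (s * D (Fin.last m) (Fin.last m))
          • Matrix.single (Fin.last m) (Fin.last m) 1 := by
    rw [hCeq]
    ext i j
    simp only [Matrix.hadamard_apply, Matrix.add_apply, Matrix.smul_apply,
      Matrix.single, Matrix.of_apply, smul_eq_mul, add_mul, mul_ite, mul_one, mul_zero]
    congr 1
    by_cases h : Fin.last m = i ∧ Fin.last m = j
    · rw [if_pos h, if_pos h, ← h.1, ← h.2]
      try ring
    · rw [if_neg h, if_neg h, zero_mul]
  have hNlead : (Matrix.hadamard N D).submatrix (Fin.castLE m.le_succ) (Fin.castLE m.le_succ)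
      = Matrix.hadamard (C.submatrix (Fin.castLE m.le_succ) (Fin.castLE m.le_succ))
          (D.submatrix (Fin.castLE m.le_succ) (Fin.castLE m.le_succ)) := by
    ext i j
    simp only [Matrix.submatrix_apply, Matrix.hadamard_apply]
    congr 1
    have hCij := congrFun (congrFun (congrArg (fun (X : Matrix _ _ ℂ) => (X : _ → _ → ℂ)) hCeq)
      (Fin.castLE m.le_succ i)) (Fin.castLE m.le_succ j)
    simp only [Matrix.add_apply, Matrix.smul_apply, Matrix.single, Matrix.of_apply,
      smul_eq_mul] at hCij
    have hne : ¬(Fin.last m = Fin.castLE m.le_succ i ∧ Fin.last m = Fin.castLE m.le_succ j) := by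
      rintro ⟨h1, -⟩
      have := congrArg Fin.val h1
      simp [Fin.last] at this
      omega
    rw [if_neg hne, mul_zero, add_zero] at hCij
    exact hCij.symm
  have hZ : 0 ≤ (Matrix.hadamard N D).det :=
    aux_psd_det_nonneg (hadamard_posSemidef hN hD.posSemidef)
  rw [hhad, det_add_single, hNlead, ← hs, mul_assoc]
  exact le_add_of_nonneg_left hZ

theorem had_det_pos : ∀ (m : ℕ) (C D : Matrix (Fin m) (Fin m) ℂ),
    C.PosDef → D.PosDef → 0 < (Matrix.hadamard C D).det
  | 0, C, D, _, _ => by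
    rw [Matrix.det_fin_zero]
    exact zero_lt_one
  | (m+1), C, D, hC, hD => by
    have hlC := posDef_submatrix hC (Fin.castLE_injective m.le_succ)
    have hlD := posDef_submatrix hD (Fin.castLE_injective m.le_succ)
    have ih := had_det_pos m _ _ hlC hlD
    refine lt_of_lt_of_le ?_ (step hC hD)
    exact mul_pos (mul_pos (aux_cdiv_pos hC.det_pos hlC.det_pos) (aux_pd_diag_pos hD _)) ih

theorem final {n m : ℕ} (A B : Matrix (Fin n) (Fin n) ℂ)
    (hA : A.PosDef) (hB : B.PosDef) (h1 : m + 1 ≤ n) (h2 : m ≤ n) (hm : m < n) :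
    ((Matrix.hadamard (leadSub A (m+1) h1) (leadSub B (m+1) h1)).det.re /
          (Matrix.hadamard (leadSub A m h2) (leadSub B m h2)).det.re ≥
        (A ⟨m, hm⟩ ⟨m, hm⟩).re *
          (leadSub B (m+1) h1).det.re / (leadSub B m h2).det.re ∧
      (A ⟨m, hm⟩ ⟨m, hm⟩).re *
          (leadSub B (m+1) h1).det.re / (leadSub B m h2).det.re ≥
        (leadSub A (m+1) h1 * leadSub B (m+1) h1).det.re /
          (leadSub A m h2 * leadSub B m h2).det.re) ∧
    ((Matrix.hadamard (leadSub A (m+1) h1) (leadSub B (m+1) h1)).det.re /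
          (Matrix.hadamard (leadSub A m h2) (leadSub B m h2)).det.re ≥
        (B ⟨m, hm⟩ ⟨m, hm⟩).re *
          (leadSub A (m+1) h1).det.re / (leadSub A m h2).det.re ∧
      (B ⟨m, hm⟩ ⟨m, hm⟩).re *
          (leadSub A (m+1) h1).det.re / (leadSub A m h2).det.re ≥
        (leadSub A (m+1) h1 * leadSub B (m+1) h1).det.re /
          (leadSub A m h2 * leadSub B m h2).det.re) := by
  set Ap := leadSub A (m+1) h1 with hApdef
  set Bp := leadSub B (m+1) h1 with hBpdef
  set Am := leadSub A m h2 with hAmdef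
  set Bm := leadSub B m h2 with hBmdef
  have hAp : Ap.PosDef := posDef_submatrix hA (Fin.castLE_injective h1)
  have hBp : Bp.PosDef := posDef_submatrix hB (Fin.castLE_injective h1)
  have hAm : Am.PosDef := posDef_submatrix hA (Fin.castLE_injective h2)
  have hBm : Bm.PosDef := posDef_submatrix hB (Fin.castLE_injective h2)
  -- the leading submatrix of `Ap` is `Am`
  have hAlead : Ap.submatrix (Fin.castLE m.le_succ) (Fin.castLE m.le_succ) = Am := rfl
  have hBlead : Bp.submatrix (Fin.castLE m.le_succ) (Fin.castLE m.le_succ) = Bm := rfl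
  have haA : A ⟨m, hm⟩ ⟨m, hm⟩ = Ap (Fin.last m) (Fin.last m) := rfl
  have haB : B ⟨m, hm⟩ ⟨m, hm⟩ = Bp (Fin.last m) (Fin.last m) := rfl
  -- positivity of all the relevant complex numbers
  have pAp := hAp.det_pos
  have pBp := hBp.det_pos
  have pAm := hAm.det_pos
  have pBm := hBm.det_pos
  have pa := aux_pd_diag_pos hAp (Fin.last m)
  have pb := aux_pd_diag_pos hBp (Fin.last m)
  have pH := had_det_pos (m+1) Ap Bp hAp hBp
  have ph := had_det_pos m Am Bm hAm hBm
  -- complex inequalities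
  have k1 : Ap.det / Am.det * (Bp (Fin.last m) (Fin.last m))
      * (Matrix.hadamard Am Bm).det ≤ (Matrix.hadamard Ap Bp).det := by
    have := step hAp hBp
    rwa [hAlead, hBlead] at this
  have k2 : Bp.det / Bm.det * (Ap (Fin.last m) (Fin.last m))
      * (Matrix.hadamard Am Bm).det ≤ (Matrix.hadamard Ap Bp).det := by
    have hc1 : Matrix.hadamard Bp Ap = Matrix.hadamard Ap Bp := by
      ext i j; exact mul_comm _ _
    have hc2 : Matrix.hadamard Bm Am = Matrix.hadamard Am Bm := by
      ext i j; exact mul_comm _ _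
    have := step hBp hAp
    rwa [hAlead, hBlead, hc1, hc2] at this
  have f1 : Ap.det ≤ Ap (Fin.last m) (Fin.last m) * Am.det := by
    have := fischer hAp
    rwa [hAlead] at this
  have f2 : Bp.det ≤ Bp (Fin.last m) (Fin.last m) * Bm.det := by
    have := fischer hBp
    rwa [hBlead] at this
  -- pass to real parts
  have K1 : Ap.det.re / Am.det.re * (Bp (Fin.last m) (Fin.last m)).re
      * (Matrix.hadamard Am Bm).det.re ≤ (Matrix.hadamard Ap Bp).det.re := by
    rw [aux_creal pAp, aux_creal pAm, aux_creal pb, aux_creal ph, aux_creal pH] at k1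
    exact_mod_cast k1
  have K2 : Bp.det.re / Bm.det.re * (Ap (Fin.last m) (Fin.last m)).re
      * (Matrix.hadamard Am Bm).det.re ≤ (Matrix.hadamard Ap Bp).det.re := by
    rw [aux_creal pBp, aux_creal pBm, aux_creal pa, aux_creal ph, aux_creal pH] at k2
    exact_mod_cast k2
  have F1 : Ap.det.re ≤ (Ap (Fin.last m) (Fin.last m)).re * Am.det.re := by
    rw [aux_creal pAp, aux_creal pAm, aux_creal pa] at f1
    exact_mod_cast f1
  have F2 : Bp.det.re ≤ (Bp (Fin.last m) (Fin.last m)).re * Bm.det.re := by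
    rw [aux_creal pBp, aux_creal pBm, aux_creal pb] at f2
    exact_mod_cast f2
  have rpAp := aux_cre_pos pAp
  have rpBp := aux_cre_pos pBp
  have rpAm := aux_cre_pos pAm
  have rpBm := aux_cre_pos pBm
  have rpa := aux_cre_pos pa
  have rpb := aux_cre_pos pb
  have rpH := aux_cre_pos pH
  have rph := aux_cre_pos ph
  -- determinants of products
  have hmulp : (Ap * Bp).det.re = Ap.det.re * Bp.det.re := by
    rw [Matrix.det_mul, aux_creal pAp, aux_creal pBp, ← Complex.ofReal_mul]
    simp
  have hmulm : (Am * Bm).det.re = Am.det.re * Bm.det.re := by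
    rw [Matrix.det_mul, aux_creal pAm, aux_creal pBm, ← Complex.ofReal_mul]
    simp
  rw [hmulp, hmulm, haA, haB]
  refine ⟨⟨?_, ?_⟩, ?_, ?_⟩
  · rw [ge_iff_le, div_le_div_iff₀ rpBm rph]
    calc (Ap (Fin.last m) (Fin.last m)).re * Bp.det.re * (Matrix.hadamard Am Bm).det.re
        = (Bp.det.re / Bm.det.re * (Ap (Fin.last m) (Fin.last m)).re
            * (Matrix.hadamard Am Bm).det.re) * Bm.det.re := by
          field_simp
      _ ≤ (Matrix.hadamard Ap Bp).det.re * Bm.det.re :=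
          mul_le_mul_of_nonneg_right K2 rpBm.le
  · rw [ge_iff_le, div_le_div_iff₀ (mul_pos rpAm rpBm) rpBm]
    have := mul_le_mul_of_nonneg_right F1 (mul_pos rpBp rpBm).le
    nlinarith
  · rw [ge_iff_le, div_le_div_iff₀ rpAm rph]
    calc (Bp (Fin.last m) (Fin.last m)).re * Ap.det.re * (Matrix.hadamard Am Bm).det.re
        = (Ap.det.re / Am.det.re * (Bp (Fin.last m) (Fin.last m)).re
            * (Matrix.hadamard Am Bm).det.re) * Am.det.re := by
          field_simp
      _ ≤ (Matrix.hadamard Ap Bp).det.re * Am.det.re :=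
          mul_le_mul_of_nonneg_right K1 rpAm.le
  · rw [ge_iff_le, div_le_div_iff₀ (mul_pos rpAm rpBm) rpAm]
    have := mul_le_mul_of_nonneg_right F2 (mul_pos rpAp rpAm).le
    nlinarith

end Aux

/-- For `n × n` positive definite matrices `A, B` and `2 ≤ p ≤ n`, the two chains
`det(A_p∘B_p)/det(A_{p-1}∘B_{p-1}) ≥ a_{pp} det B_p/det B_{p-1} ≥ det(A_pB_p)/det(A_{p-1}B_{p-1})`
and
`det(A_p∘B_p)/det(A_{p-1}∘B_{p-1}) ≥ b_{pp} det A_p/det A_{p-1} ≥ det(A_pB_p)/det(A_{p-1}B_{p-1})`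
hold. -/
theorem det_ratio_chains {n : ℕ} (A B : Matrix (Fin n) (Fin n) ℂ)
    (hA : A.PosDef) (hB : B.PosDef) (p : ℕ) (hp2 : 2 ≤ p) (hpn : p ≤ n) :
    ((Matrix.hadamard (leadSub A p hpn) (leadSub B p hpn)).det.re /
          (Matrix.hadamard (leadSub A (p - 1) (by omega)) (leadSub B (p - 1) (by omega))).det.re ≥
        (A ⟨p - 1, by omega⟩ ⟨p - 1, by omega⟩).re *
          (leadSub B p hpn).det.re / (leadSub B (p - 1) (by omega)).det.re ∧
      (A ⟨p - 1, by omega⟩ ⟨p - 1, by omega⟩).re *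
          (leadSub B p hpn).det.re / (leadSub B (p - 1) (by omega)).det.re ≥
        (leadSub A p hpn * leadSub B p hpn).det.re /
          (leadSub A (p - 1) (by omega) * leadSub B (p - 1) (by omega)).det.re) ∧
    ((Matrix.hadamard (leadSub A p hpn) (leadSub B p hpn)).det.re /
          (Matrix.hadamard (leadSub A (p - 1) (by omega)) (leadSub B (p - 1) (by omega))).det.re ≥
        (B ⟨p - 1, by omega⟩ ⟨p - 1, by omega⟩).re *
          (leadSub A p hpn).det.re / (leadSub A (p - 1) (by omega)).det.re ∧
      (B ⟨p - 1, by omega⟩ ⟨p - 1, by omega⟩).re *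
          (leadSub A p hpn).det.re / (leadSub A (p - 1) (by omega)).det.re ≥
        (leadSub A p hpn * leadSub B p hpn).det.re /
          (leadSub A (p - 1) (by omega) * leadSub B (p - 1) (by omega)).det.re) := by
  obtain ⟨m, rfl⟩ : ∃ m, p = m + 1 := ⟨p - 1, by omega⟩
  exact final A B hA hB hpn (by omega) (by omega)
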